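/- For m ≥ 2, the strong resolving graph of the even cycle C_{2m} is a perfect matching mK_2: two vertices of C_{2m} are mutually maximally distant if and only if they are antipodal. -/

import Mathlib

open SimpleGraph

variable {V : Type*} {W : Type*}

/-- `x` lies on some `y`–`z` geodesic in `G`. -/
def LiesOnGeodesic (G : SimpleGraph V) (x y z : V) : Prop :=
  G.dist y x + G.dist x z = G.dist y z

/-- A strong resolving set of `G`. -/
def IsStrongResolvingSet (G : SimpleGraph V) (S : Set V) : Prop :=
  ∀ x y : V, x ≠ y → ∃ z ∈ S,
    LiesOnGeodesic G x y z ∨ LiesOnGeodesic G y x z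

/-- The strong metric dimension of a finite graph. -/
noncomputable def sdim (G : SimpleGraph V) [Fintype V] : ℕ :=
  sInf {n : ℕ | ∃ S : Finset V, S.card = n ∧ IsStrongResolvingSet G ↑S}

/-- `u` is maximally distant from `v` in `G`. -/
def MaxDistFrom (G : SimpleGraph V) (u v : V) : Prop :=
  ∀ w : V, G.Adj u w → G.dist w v ≤ G.dist u v

/-- `u` and `v` are mutually maximally distant in `G`. -/
def MutMaxDist (G : SimpleGraph V) (u v : V) : Prop :=
  MaxDistFrom G u v ∧ MaxDistFrom G v u

/-- The strong resolving graph of `G` (on the full vertex set; vertices not in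
any MMD pair are isolated). -/
def srGraph (G : SimpleGraph V) : SimpleGraph V where
  Adj u v := u ≠ v ∧ MutMaxDist G u v
  symm := by
    constructor
    rintro u v ⟨h, h1, h2⟩
    exact ⟨h.symm, h2, h1⟩
  loopless := by constructor; rintro v ⟨h, -⟩; exact h rfl

/-- The cycle graph on `n` vertices (`n ≥ 3`), as a graph on `Fin n`. -/
def cycGraph (n : ℕ) : SimpleGraph (Fin n) where
  Adj i j := i ≠ j ∧ ((i.val + 1) % n = j.val ∨ (j.val + 1) % n = i.val)
  symm := by
    constructor
    rintro i j ⟨h, h'⟩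
    exact ⟨h.symm, h'.symm⟩
  loopless := by constructor; rintro i ⟨h, -⟩; exact h rfl

namespace CycAux

/-- circular distance -/
def cd {n : ℕ} (i j : Fin n) : ℕ := min (j - i).val (n - (j - i).val)

lemma sub_val {n : ℕ} (i j : Fin n) : (j - i).val = (n - i.val + j.val) % n := rfl

lemma sub_val' {n : ℕ} (i j : Fin n) :
    (j - i).val = if i.val ≤ j.val then j.val - i.val else n + j.val - i.val := by
  have hi := i.2; have hj := j.2
  rw [sub_val]
  rcases le_or_gt i.val j.val with h | h
  · rw [if_pos h, Nat.mod_eq_sub_mod (by omega), Nat.mod_eq_of_lt (by omega)]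
    omega
  · rw [if_neg (by omega), Nat.mod_eq_of_lt (by omega)]
    omega

lemma cd_eq_zero {n : ℕ} (hn : 3 ≤ n) {i j : Fin n} (h : cd i j = 0) : i = j := by
  haveI : NeZero n := ⟨by omega⟩
  have hi := i.2; have hj := j.2
  have h0 : (j - i).val = 0 := by
    unfold cd at h; rw [sub_val'] at h ⊢; split at h <;> split <;> omega
  have : j - i = 0 := Fin.ext h0
  exact (sub_eq_zero.mp this).symm

lemma adj_iff {n : ℕ} (hn : 3 ≤ n) {i j : Fin n} :
    (cycGraph n).Adj i j ↔ ((i.val + 1) % n = j.val ∨ (j.val + 1) % n = i.val) := by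
  constructor
  · rintro ⟨-, h⟩; exact h
  · intro h
    refine ⟨?_, h⟩
    rintro rfl
    have hi := i.2
    rcases h with h | h <;>
    · rcases Nat.lt_or_ge (i.val + 1) n with h' | h'
      · rw [Nat.mod_eq_of_lt h'] at h; omega
      · have : i.val + 1 = n := by omega
        rw [this, Nat.mod_self] at h; omega

lemma val_add_one {n : ℕ} (hn : 3 ≤ n) (i : Fin n) :
    haveI : NeZero n := ⟨by omega⟩
    (i + 1).val = if i.val + 1 < n then i.val + 1 else 0 := by
  haveI : NeZero n := ⟨by omega⟩
  have hi := i.2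
  rw [Fin.val_add, Fin.val_one', Nat.mod_eq_of_lt (show 1 < n by omega)]
  rcases Nat.lt_or_ge (i.val + 1) n with h | h
  · rw [if_pos h, Nat.mod_eq_of_lt h]
  · rw [if_neg (by omega)]
    have : i.val + 1 = n := by omega
    rw [this, Nat.mod_self]

lemma val_sub_one {n : ℕ} (hn : 3 ≤ n) (i : Fin n) :
    haveI : NeZero n := ⟨by omega⟩
    (i - 1).val = if i.val = 0 then n - 1 else i.val - 1 := by
  haveI : NeZero n := ⟨by omega⟩
  have hi := i.2
  rw [sub_val', Fin.val_one']
  rw [Nat.mod_eq_of_lt (show 1 < n by omega)]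
  split <;> split <;> omega

lemma adj_add_one {n : ℕ} (hn : 3 ≤ n) (i : Fin n) :
    haveI : NeZero n := ⟨by omega⟩
    (cycGraph n).Adj i (i + 1) := by
  haveI : NeZero n := ⟨by omega⟩
  rw [adj_iff hn]
  left
  rw [val_add_one hn]
  have hi := i.2
  split
  · rw [Nat.mod_eq_of_lt (by omega)]
  · have : i.val + 1 = n := by omega
    rw [this, Nat.mod_self]

lemma adj_sub_one {n : ℕ} (hn : 3 ≤ n) (i : Fin n) :
    haveI : NeZero n := ⟨by omega⟩
    (cycGraph n).Adj i (i - 1) := by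
  haveI : NeZero n := ⟨by omega⟩
  rw [adj_iff hn]
  right
  rw [val_sub_one hn]
  have hi := i.2
  split
  · have : n - 1 + 1 = n := by omega
    rw [this, Nat.mod_self]; omega
  · rw [Nat.mod_eq_of_lt (by omega)]; omega

end CycAux

namespace CycAux

lemma mod_succ_eq {n a b : ℕ} (hn : 0 < n) (ha : a < n) (h : (a + 1) % n = b) :
    b = a + 1 ∨ (a + 1 = n ∧ b = 0) := by
  rcases Nat.lt_or_ge (a + 1) n with h' | h'
  · left; rw [Nat.mod_eq_of_lt h'] at h; omega
  · right
    have hh : a + 1 = n := by omega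
    rw [hh, Nat.mod_self] at h; omega

lemma step {n : ℕ} (hn : 3 ≤ n) {i j : Fin n} (h : 0 < cd i j) :
    ∃ k, (cycGraph n).Adj i k ∧ cd k j + 1 = cd i j := by
  haveI : NeZero n := ⟨by omega⟩
  have hi := i.2; have hj := j.2
  rcases le_or_gt (2 * (j - i).val) n with hc | hc
  · refine ⟨i + 1, adj_add_one hn i, ?_⟩
    rw [sub_val'] at hc
    simp only [cd, sub_val', val_add_one hn] at h hc ⊢
    split_ifs at h hc ⊢ <;> omega
  · refine ⟨i - 1, adj_sub_one hn i, ?_⟩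
    rw [sub_val'] at hc
    simp only [cd, sub_val', val_sub_one hn] at h hc ⊢
    split_ifs at h hc ⊢ <;> omega

lemma lipschitz {n : ℕ} (hn : 3 ≤ n) {i k : Fin n} (j : Fin n)
    (h : (cycGraph n).Adj i k) : cd i j ≤ cd k j + 1 := by
  have hi := i.2; have hj := j.2; have hk := k.2
  rw [adj_iff hn] at h
  simp only [cd, sub_val']
  rcases h with h | h
  · rcases mod_succ_eq (by omega) hi h with h' | h' <;> split_ifs <;> omega
  · rcases mod_succ_eq (by omega) hk h with h' | h' <;> split_ifs <;> omega

lemma exists_walk {n : ℕ} (hn : 3 ≤ n) :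
    ∀ (c : ℕ) (i j : Fin n), cd i j ≤ c →
      ∃ w : (cycGraph n).Walk i j, w.length ≤ cd i j := by
  intro c
  induction c with
  | zero =>
    intro i j h
    have : i = j := cd_eq_zero hn (by omega)
    subst this
    exact ⟨Walk.nil, by simp⟩
  | succ c ih =>
    intro i j h
    rcases Nat.eq_zero_or_pos (cd i j) with h0 | h0
    · have := cd_eq_zero hn h0
      subst this
      exact ⟨Walk.nil, by simp⟩
    · obtain ⟨k, hadj, hk⟩ := step hn h0
      obtain ⟨w, hw⟩ := ih k j (by omega)
      exact ⟨Walk.cons hadj w, by rw [Walk.length_cons]; omega⟩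

lemma cd_le_length {n : ℕ} (hn : 3 ≤ n) :
    ∀ {i j : Fin n} (p : (cycGraph n).Walk i j), cd i j ≤ p.length := by
  intro i j p
  induction p with
  | nil => simp [cd, sub_val']
  | @cons a b c hadj p ih =>
    rw [Walk.length_cons]
    exact le_trans (lipschitz hn c hadj) (by omega)

lemma dist_eq {n : ℕ} (hn : 3 ≤ n) (i j : Fin n) :
    (cycGraph n).dist i j = cd i j := by
  obtain ⟨w, hw⟩ := exists_walk hn (cd i j) i j le_rfl
  apply le_antisymm
  · exact le_trans (SimpleGraph.dist_le w) hw
  · obtain ⟨p, hp⟩ := SimpleGraph.Reachable.exists_walk_length_eq_dist (⟨w⟩ : (cycGraph n).Reachable i j)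
    rw [← hp]
    exact cd_le_length hn p

lemma cd_le_half {m : ℕ} (i j : Fin (2 * m)) : cd i j ≤ m := by
  have := (j - i).2
  simp only [cd]
  omega

lemma cd_comm {n : ℕ} (i j : Fin n) : cd i j = cd j i := by
  have hi := i.2; have hj := j.2
  simp only [cd, sub_val']
  split_ifs <;> omega

end CycAux

open CycAux in
theorem srGraph_even_cycle (m : ℕ) (hm : 2 ≤ m) :
    ∀ u v : Fin (2 * m), (srGraph (cycGraph (2 * m))).Adj u v ↔
      (cycGraph (2 * m)).dist u v = m := by
  intro u v
  have hn : 3 ≤ 2 * m := by omega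
  haveI : NeZero (2 * m) := ⟨by omega⟩
  rw [dist_eq hn]
  constructor
  · rintro ⟨hne, hmax, -⟩
    have hpos : cd u v ≠ 0 := fun h => hne (cd_eq_zero hn h)
    by_contra hlt'
    have hlt : cd u v < m := lt_of_le_of_ne (cd_le_half u v) hlt'
    have hu := u.2; have hv := v.2
    rcases le_or_gt (2 * (v - u).val) (2 * m) with hc | hc
    · have h1 := hmax (u - 1) (adj_sub_one hn u)
      rw [dist_eq hn, dist_eq hn] at h1
      rw [sub_val'] at hc
      simp only [cd, sub_val', val_sub_one hn] at h1 hlt hpos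
      split_ifs at h1 hlt hpos hc <;> omega
    · have h1 := hmax (u + 1) (adj_add_one hn u)
      rw [dist_eq hn, dist_eq hn] at h1
      rw [sub_val'] at hc
      simp only [cd, sub_val', val_add_one hn] at h1 hlt hpos
      split_ifs at h1 hlt hpos hc <;> omega
  · intro h
    refine ⟨?_, ?_, ?_⟩
    · rintro rfl
      rw [show cd u u = 0 by simp [cd, sub_val']] at h
      omega
    · intro w hw
      rw [dist_eq hn, dist_eq hn, h]
      exact cd_le_half w v
    · intro w hw
      rw [dist_eq hn, dist_eq hn, cd_comm v u, h]
      exact cd_le_half w u
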